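/- For every odd n ≥ 3, the polynomial identity X·(f_n(X))² = 2·T_n((X+2)/2) − 2 holds in ℚ[X]; that is, f_n(X) is a square root of the polynomial (2·T_n((X+2)/2) − 2)/X, where T_n((X+2)/2) denotes the composition of the n-th Chebyshev polynomial of the first kind with the polynomial (X+2)/2. -/

import Mathlib

noncomputable section

open Polynomial

/-- `ψ^i(X) := Σ_{j=1}^{i} (C(i,j)·C(i+j−1,j)/C(2j−1,j))·X^j ∈ ℚ[X]`; `ψ^0 = 0`. -/
def psiPoly (i : ℕ) : ℚ[X] :=
  ∑ j ∈ Finset.Icc 1 i,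
    C (((i.choose j : ℚ) * ((i + j - 1).choose j : ℚ)) / ((2 * j - 1).choose j : ℚ)) * X ^ j

/-- For odd `n ≥ 3`,
`f_n(X) := n + Σ_{j=1}^{(n−3)/2} (n·(n²−1²)·(n²−3²)⋯(n²−(2j−1)²)/(2^{2j}·(2j+1)!))·X^j
  + X^{(n−1)/2} ∈ ℚ[X]`. -/
def fPoly (n : ℕ) : ℚ[X] :=
  C (n : ℚ) +
    ∑ j ∈ Finset.Icc 1 ((n - 3) / 2),
      C (((n : ℚ) * ∏ i ∈ Finset.Icc 1 j, ((n : ℚ) ^ 2 - (2 * (i : ℚ) - 1) ^ 2)) /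
          (2 ^ (2 * j) * ((2 * j + 1).factorial : ℚ))) * X ^ j +
    X ^ ((n - 1) / 2)

/-- `(X+2)/2 ∈ ℚ[X]`. -/
def halfXAddTwo : ℚ[X] := C (1 / 2 : ℚ) * (X + 2)





lemma twoHalf : (2 : ℚ[X]) * halfXAddTwo = X + 2 := by
  unfold halfXAddTwo
  rw [show (2 : ℚ[X]) = C 2 from (map_ofNat C 2).symm, ← mul_assoc, ← C_mul]
  norm_num

def t (k : ℤ) : ℚ[X] := (Chebyshev.T ℚ k).comp halfXAddTwo

lemma trec (k : ℤ) : t (k + 2) = (X + 2) * t (k + 1) - t k := by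
  unfold t
  rw [Chebyshev.T_add_two]
  simp only [sub_comp, mul_comp, X_comp, ofNat_comp]
  linear_combination (Chebyshev.T ℚ (k+1)).comp halfXAddTwo * twoHalf

lemma t_one : t 1 = halfXAddTwo := by simp [t, Chebyshev.T_one]
lemma t_two : t 2 = 2 * halfXAddTwo ^ 2 - 1 := by
  simp [t, Chebyshev.T_two, sub_comp, mul_comp, pow_comp]
def hP : ℕ → ℚ[X]
  | 0 => 1
  | 1 => X + 3
  | (m+2) => (X + 2) * hP (m+1) - hP m

lemma main_h : ∀ m : ℕ,
    (X * hP m ^ 2 = 2 * t (2*m+1) - 2) ∧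
    (X * hP (m+1) ^ 2 = 2 * t (2*m+3) - 2) ∧
    (X * (hP m * hP (m+1)) = 2 * t (2*m+2) - (X+2)) := by
  intro m
  induction m with
  | zero =>
    have h1 := t_one
    have h2 := t_two
    have h3 : t 3 = (X+2) * t 2 - t 1 := trec 1
    have hh := twoHalf
    refine ⟨?_, ?_, ?_⟩
    · show X * hP 0 ^ 2 = 2 * t (2*0+1) - 2
      norm_num [hP]
      rw [h1]; linear_combination -hh
    · show X * hP 1 ^ 2 = 2 * t (2*0+3) - 2
      norm_num [hP]
      rw [h3, h2, h1]
      linear_combination (-(2*X+4)*halfXAddTwo - (X^2+4*X+3)) * hh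
    · show X * (hP 0 * hP 1) = 2 * t (2*0+2) - (X+2)
      norm_num [hP]
      rw [h2]
      linear_combination (-(2*halfXAddTwo + X + 2)) * hh
  | succ m ih =>
    obtain ⟨I0, I1, J0⟩ := ih
    have e1 : (2*((m:ℤ)+1)+1) = (2*m+1)+2 := by ring
    have e2 : (2*((m:ℤ)+1)+2) = (2*m+2)+2 := by ring
    have e3 : (2*((m:ℤ)+1)+3) = (2*m+3)+2 := by ring
    have r1 : t ((2*m+1)+2) = (X+2) * t ((2*m+1)+1) - t (2*m+1) := trec _
    have r2 : t ((2*m+2)+2) = (X+2) * t ((2*m+2)+1) - t (2*m+2) := trec _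
    have r3 : t ((2*m+3)+2) = (X+2) * t ((2*m+3)+1) - t (2*m+3) := trec _
    have i12 : (2*(m:ℤ)+1)+1 = 2*m+2 := by ring
    have i23 : (2*(m:ℤ)+2)+1 = 2*m+3 := by ring
    have i34 : (2*(m:ℤ)+3)+1 = 2*m+4 := by ring
    have i4 : (2*(m:ℤ)+2)+2 = 2*m+4 := by ring
    have i5 : (2*(m:ℤ)+3)+2 = 2*m+5 := by ring
    have i3' : (2*(m:ℤ)+1)+2 = 2*m+3 := by ring
    rw [i12] at r1; rw [i23, i4] at r2; rw [i34, i5] at r3; rw [i3'] at r1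
    have hrec : hP (m+2) = (X+2) * hP (m+1) - hP m := rfl
    refine ⟨I1, ?_, ?_⟩
    · push_cast
      rw [e3, i5]
      show X * hP (m+2) ^ 2 = 2 * t (2*(m:ℤ)+5) - 2
      linear_combination (X*(hP (m+2) + ((X+2)*hP (m+1) - hP m))) * hrec +
        (X+2)^2 * I1 - 2*(X+2) * J0 + I0 - 2 * r3 - 2*(X+2) * r2 + 2 * r1
    · push_cast
      rw [e2, i4]
      show X * (hP (m+1) * hP (m+2)) = 2 * t (2*(m:ℤ)+4) - (X+2)
      linear_combination (X * hP (m+1)) * hrec + (X+2) * I1 - J0 - 2 * r2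


def Paux (x : ℚ) (N : ℕ) : ℚ := ∏ i ∈ Finset.range N, (x - i)

lemma Paux_zero (x : ℚ) : Paux x 0 = 1 := by simp [Paux]

lemma Paux_succ_back (x : ℚ) (N : ℕ) : Paux x (N+1) = Paux x N * (x - N) := by
  simp [Paux, Finset.prod_range_succ]

lemma Paux_succ_front (x : ℚ) (N : ℕ) : Paux x (N+1) = x * Paux (x-1) N := by
  rw [Paux, Finset.prod_range_succ']
  simp only [Nat.cast_zero, sub_zero]
  rw [mul_comm, Paux]
  congr 1
  apply Finset.prod_congr rfl
  intro i _
  push_cast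
  ring

lemma Paux_nat_fact (N : ℕ) : Paux (N : ℚ) N = N.factorial := by
  induction N with
  | zero => simp [Paux]
  | succ N ih =>
    rw [Paux_succ_front]
    push_cast
    rw [show ((N:ℚ) + 1 - 1) = N by ring, ih, Nat.factorial_succ]
    push_cast
    ring

lemma Paux_eq_zero {m j : ℕ} (h : m < j) : Paux ((m:ℚ) + j) (2*j) = 0 := by
  rw [Paux]
  apply Finset.prod_eq_zero (i := m + j)
  · simp only [Finset.mem_range]; omega
  · push_cast; ring

def dd (m j : ℕ) : ℚ := (2*m+1) / ((2*j+1).factorial) * Paux ((m:ℚ)+j) (2*j)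

lemma dd_zero_of_lt {m j : ℕ} (h : m < j) : dd m j = 0 := by
  rw [dd, Paux_eq_zero h, mul_zero]

lemma dd_self (m : ℕ) : dd m m = 1 := by
  rw [dd, show ((m:ℚ) + m) = ((2*m : ℕ) : ℚ) by push_cast; ring, Paux_nat_fact]
  rw [show 2*m+1 = (2*m)+1 from rfl, Nat.factorial_succ]
  have h1 : ((2*m).factorial : ℚ) ≠ 0 := Nat.cast_ne_zero.mpr (Nat.factorial_ne_zero _)
  field_simp
  push_cast; ring

lemma dd_zero (m : ℕ) : dd m 0 = 2*m+1 := by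
  simp [dd, Paux, Nat.factorial]

lemma dd_rec (m k : ℕ) :
    dd (m+2) (k+1) = dd (m+1) k + 2 * dd (m+1) (k+1) - dd m (k+1) := by
  have hfact : ((2*(k+1)+1).factorial : ℚ)
      = (2*k+3) * ((2*k+2) * ((2*k+1).factorial)) := by
    rw [show 2*(k+1)+1 = (2*k+1)+1+1 by ring, Nat.factorial_succ, Nat.factorial_succ]
    push_cast
    ring
  set Q : ℚ := Paux ((m:ℚ) + 1 + k) (2*k) with hQ
  have p1 : Paux ((m:ℚ)+2+(k+1)) (2*(k+1)) = ((m:ℚ)+k+3) * (((m:ℚ)+k+2) * Q) := by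
    rw [show 2*(k+1) = (2*k+1)+1 by ring, Paux_succ_front,
        show ((m:ℚ)+2+(k+1)) - 1 = (m:ℚ)+1+k+1 by push_cast; ring,
        show (2*k+1) = (2*k)+1 from rfl, Paux_succ_front,
        show ((m:ℚ)+1+k+1) - 1 = (m:ℚ)+1+k by ring, ← hQ]
    push_cast; ring
  have p2 : Paux ((m:ℚ)+1+(k+1)) (2*(k+1)) = ((m:ℚ)+k+2) * (Q * ((m:ℚ)+1-k)) := by
    rw [show 2*(k+1) = (2*k+1)+1 by ring, Paux_succ_front,
        show ((m:ℚ)+1+(k+1)) - 1 = (m:ℚ)+1+k by push_cast; ring,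
        show (2*k+1) = (2*k)+1 from rfl, Paux_succ_back, ← hQ]
    push_cast; ring
  have p3 : Paux ((m:ℚ)+(k+1)) (2*(k+1)) = (Q * ((m:ℚ)+1-k)) * ((m:ℚ)-k) := by
    rw [show 2*(k+1) = (2*k+1)+1 by ring, Paux_succ_back,
        show (2*k+1) = (2*k)+1 from rfl, Paux_succ_back,
        show ((m:ℚ)+(k+1)) = (m:ℚ)+1+k by push_cast; ring, ← hQ]
    push_cast; ring
  have hne : ((2*k+1).factorial : ℚ) ≠ 0 := Nat.cast_ne_zero.mpr (Nat.factorial_ne_zero _)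
  rw [dd, dd, dd, dd, hfact]
  push_cast
  rw [p1, p2, p3]
  field_simp
  ring

def sumDD (m : ℕ) : ℚ[X] := ∑ j ∈ Finset.range (m+1), C (dd m j) * X ^ j

lemma sumDD_ext (m N : ℕ) (h : m + 1 ≤ N) :
    sumDD m = ∑ j ∈ Finset.range N, C (dd m j) * X ^ j := by
  rw [sumDD, ← Finset.sum_range_add_sum_Ico _ h]
  have : ∑ j ∈ Finset.Ico (m+1) N, C (dd m j) * X ^ j = 0 := by
    apply Finset.sum_eq_zero
    intro j hj
    rw [Finset.mem_Ico] at hj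
    rw [dd_zero_of_lt (by omega), map_zero, zero_mul]
  rw [this, add_zero]

lemma sumDD_rec (m : ℕ) : sumDD (m+2) = (X + 2) * sumDD (m+1) - sumDD m := by
  have key : (∑ j ∈ Finset.range (m+4), C (dd (m+2) j + dd m j - 2 * dd (m+1) j) * X ^ j)
      = X * ∑ j ∈ Finset.range (m+4), C (dd (m+1) j) * X ^ j := by
    rw [Finset.mul_sum]
    rw [Finset.sum_range_succ' (fun j => C (dd (m+2) j + dd m j - 2 * dd (m+1) j) * X ^ j) (m+3)]
    rw [Finset.sum_range_succ (fun j => X * (C (dd (m+1) j) * X ^ j)) (m+3)]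
    rw [dd_zero_of_lt (show m+1 < m+3 by omega)]
    simp only [map_zero, zero_mul, mul_zero, add_zero]
    have h0 : dd (m+2) 0 + dd m 0 - 2 * dd (m+1) 0 = 0 := by
      rw [dd_zero, dd_zero, dd_zero]; push_cast; ring
    rw [h0]
    simp only [map_zero, zero_mul, add_zero]
    apply Finset.sum_congr rfl
    intro j _
    have hj : dd (m+2) (j+1) + dd m (j+1) - 2 * dd (m+1) (j+1) = dd (m+1) j := by
      have := dd_rec m j; linarith
    rw [hj]; ring
  have split : (∑ j ∈ Finset.range (m+4), C (dd (m+2) j + dd m j - 2 * dd (m+1) j) * X ^ j)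
      = (∑ j ∈ Finset.range (m+4), C (dd (m+2) j) * X ^ j)
        + (∑ j ∈ Finset.range (m+4), C (dd m j) * X ^ j)
        - 2 * (∑ j ∈ Finset.range (m+4), C (dd (m+1) j) * X ^ j) := by
    rw [Finset.mul_sum, ← Finset.sum_add_distrib, ← Finset.sum_sub_distrib]
    apply Finset.sum_congr rfl
    intro j _
    rw [map_sub, map_add, map_mul, map_ofNat]
    ring
  rw [sumDD_ext (m+1) (m+4) (by omega), sumDD_ext m (m+4) (by omega),
      sumDD_ext (m+2) (m+4) (by omega)]
  rw [split] at key
  linear_combination key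


lemma prod_sq (M j : ℕ) :
    ∏ i ∈ Finset.Icc 1 j, ((2*(M:ℚ)+1)^2 - (2*(i:ℚ)-1)^2)
      = 4^j * Paux ((M:ℚ)+j) (2*j) := by
  induction j with
  | zero => simp [Paux]
  | succ j ih =>
    rw [Finset.prod_Icc_succ_top (by omega : 1 ≤ j+1), ih]
    push_cast
    rw [show 2*(j+1) = (2*j+1)+1 by ring, Paux_succ_front,
        show ((M:ℚ)+((j:ℚ)+1)) - 1 = (M:ℚ)+j by ring, Paux_succ_back]
    push_cast
    ring

lemma coeff_eq (M j : ℕ) :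
    (((2*M+1 : ℕ) : ℚ) * ∏ i ∈ Finset.Icc 1 j, (((2*M+1 : ℕ) : ℚ)^2 - (2*(i:ℚ)-1)^2)) /
      (2^(2*j) * ((2*j+1).factorial : ℚ)) = dd M j := by
  have hc : ((2*M+1 : ℕ) : ℚ) = 2*(M:ℚ)+1 := by push_cast; ring
  rw [hc, prod_sq, dd]
  have h4 : (2:ℚ)^(2*j) = 4^j := by rw [pow_mul]; norm_num
  rw [h4]
  have hne : ((2*j+1).factorial : ℚ) ≠ 0 := Nat.cast_ne_zero.mpr (Nat.factorial_ne_zero _)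
  have h4ne : (4:ℚ)^j ≠ 0 := pow_ne_zero _ (by norm_num)
  field_simp

lemma fPoly_eq (m : ℕ) : fPoly (2*(m+1)+1) = sumDD (m+1) := by
  rw [fPoly]
  rw [show (2*(m+1)+1-3)/2 = m by omega, show (2*(m+1)+1-1)/2 = m+1 by omega]
  rw [sumDD]
  rw [Finset.sum_range_succ, dd_self, map_one, one_mul]
  rw [Finset.sum_range_succ' (fun j => C (dd (m+1) j) * X ^ j) m]
  congr 1
  rw [← Finset.Ico_add_one_right_eq_Icc, Finset.sum_Ico_eq_sum_range]
  simp only [Nat.add_sub_cancel, pow_zero, mul_one]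
  have hc : C (((2*(m+1)+1 : ℕ)) : ℚ) = C (dd (m+1) 0) := by
    rw [dd_zero]; push_cast; ring_nf
  rw [hc, add_comm (C (dd (m+1) 0)) _]
  congr 1
  apply Finset.sum_congr rfl
  intro i _
  rw [Nat.add_comm 1 i, coeff_eq (m+1) (i+1)]

lemma sum_eq_hP : ∀ m : ℕ, sumDD m = hP m
  | 0 => by
    simp [sumDD, Finset.sum_range_one, dd_zero, hP]
  | 1 => by
    have h0 : dd 1 0 = 3 := by rw [dd_zero]; norm_num
    have h1 : dd 1 1 = 1 := dd_self 1
    simp [sumDD, Finset.sum_range_succ, Finset.sum_range_one, h0, h1, hP, map_ofNat]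
    ring
  | (m+2) => by
    rw [sumDD_rec, sum_eq_hP (m+1), sum_eq_hP m]
    rfl

/-- For every odd `n ≥ 3`, `X·(f_n(X))² = 2·T_n((X+2)/2) − 2` in `ℚ[X]`;
that is, `f_n` is a square root of the polynomial `(2·T_n((X+2)/2) − 2)/X`. -/
theorem X_mul_fPoly_sq_eq_chebyshev (n : ℕ) (hodd : Odd n) (hn : 3 ≤ n) :
    X * (fPoly n) ^ 2 = 2 * (Polynomial.Chebyshev.T ℚ (n : ℤ)).comp halfXAddTwo - 2 := by
  obtain ⟨k, hk⟩ := hodd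
  obtain ⟨m, rfl⟩ : ∃ m, n = 2*(m+1)+1 := ⟨(n-3)/2, by omega⟩
  rw [fPoly_eq, sum_eq_hP]
  have hmain := (main_h (m+1)).1
  unfold t at hmain
  rw [show ((2*(m+1)+1 : ℕ) : ℤ) = 2*((m+1 : ℕ) : ℤ)+1 by push_cast; ring]
  exact hmain
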